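/- Let V be a complex inner product space, c ∈ ℝ, and (M_n)_{n∈ℤ} a family of linear endomorphisms of V such that: (i) ⟨M_n u, v⟩ = ⟨u, M_{−n} v⟩ for all u, v ∈ V and n ∈ ℤ; (ii) ⁅M_j, M_n⁆ = (j−n)·M_{j+n} for all j ∈ {−1, 0, 1} and n ∈ ℤ; (iii) ⁅M_2, M_m⁆ = (2−m)·M_{m+2} + (c/12)·(2³−2)·δ_{m,−2}·id_V for all m ∈ ℤ. Then ⁅M_n, M_m⁆ = (n−m)·M_{n+m} + (c/12)·(n³−n)·δ_{n+m,0}·id_V for all n, m ∈ ℤ. -/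

import Mathlib

/-- The Virasoro relation for the `n`-th mode against all modes. -/
private def VirRel {V : Type*} [AddCommGroup V] [Module ℂ V]
    (c : ℝ) (M : ℤ → Module.End ℂ V) (n : ℤ) : Prop :=
  ∀ m : ℤ, ⁅M n, M m⁆ = ((n - m : ℤ) : ℂ) • M (n + m) +
      ((c : ℂ) / 12 * ((n ^ 3 - n : ℤ) : ℂ) * (if n + m = 0 then 1 else 0)) •
        (1 : Module.End ℂ V)

/-- Fourier modes of a dimension-2 Möbius covariant hermitian field whose
second mode satisfies the Virasoro relation with the Möbius modes automatically
satisfy the full Virasoro algebra relations with central charge `c`. -/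
theorem dimension_two_field_virasoro_relations
    {V : Type*} [NormedAddCommGroup V] [InnerProductSpace ℂ V]
    (c : ℝ) (M : ℤ → Module.End ℂ V)
    (herm : ∀ (n : ℤ) (u v : V), (inner ℂ ((M n) u) v : ℂ) = inner ℂ u ((M (-n)) v))
    (hmob : ∀ j ∈ ({-1, 0, 1} : Set ℤ), ∀ n : ℤ,
      ⁅M j, M n⁆ = ((j - n : ℤ) : ℂ) • M (j + n))
    (h2 : ∀ m : ℤ, ⁅M 2, M m⁆ = ((2 - m : ℤ) : ℂ) • M (m + 2) +
      ((c : ℂ) / 12 * ((2 : ℂ) ^ 3 - 2) * (if m = -2 then 1 else 0)) •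
        (1 : Module.End ℂ V)) :
    ∀ n m : ℤ, ⁅M n, M m⁆ = ((n - m : ℤ) : ℂ) • M (n + m) +
      ((c : ℂ) / 12 * ((n ^ 3 - n : ℤ) : ℂ) * (if n + m = 0 then 1 else 0)) •
        (1 : Module.End ℂ V) := by
  letI := LieRing.ofAssociativeRing (A := Module.End ℂ V)
  letI := LieAlgebra.ofAssociativeAlgebra (R := ℂ) (A := Module.End ℂ V)
  have lone : ∀ x : Module.End ℂ V, ⁅x, (1 : Module.End ℂ V)⁆ = 0 := by
    intro x; simp [Ring.lie_def]
  -- the Möbius modes satisfy the relation (the central term vanishes)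
  have base : ∀ j ∈ ({-1, 0, 1} : Set ℤ), VirRel c M j := by
    intro j hj m
    rw [hmob j hj m]
    have hj0 : j ^ 3 - j = 0 := by
      simp only [Set.mem_insert_iff, Set.mem_singleton_iff] at hj
      rcases hj with h | h | h <;> subst h <;> norm_num
    simp [hj0]
  -- the second mode satisfies the relation
  have base2 : VirRel c M 2 := by
    intro m
    rw [h2 m, show m + 2 = 2 + m from by ring]
    by_cases hm : 2 + m = 0
    · rw [if_pos hm, if_pos (show m = -2 by omega)]
      norm_num
    · rw [if_neg hm, if_neg (show ¬ m = -2 by omega)]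
      simp
  -- upward induction
  have step : ∀ n : ℤ, 2 ≤ n → VirRel c M n → VirRel c M (n + 1) := by
    intro n hn ih m
    have ha : ((1 - n : ℤ) : ℂ) ≠ 0 := by
      exact_mod_cast (show (1 - n : ℤ) ≠ 0 by omega)
    refine smul_right_injective (Module.End ℂ V) ha ?_
    beta_reduce
    have hbr : ((1 - n : ℤ) : ℂ) • M (n + 1) = ⁅M 1, M n⁆ := by
      rw [hmob 1 (by norm_num) n, show (1 : ℤ) + n = n + 1 from by ring]
    rw [← smul_lie, hbr, lie_lie, ih m, hmob 1 (by norm_num) m,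
      lie_add, lie_smul, lie_smul, lone, smul_zero, add_zero,
      hmob 1 (by norm_num) (n + m), lie_smul, ih (1 + m),
      show (1 : ℤ) + (n + m) = n + 1 + m from by ring,
      show n + (1 + m) = n + 1 + m from by ring]
    by_cases hd : n + 1 + m = 0
    · simp only [if_pos hd]
      have hm : m = -n - 1 := by omega
      subst hm
      match_scalars <;> (push_cast; ring)
    · simp only [if_neg hd]
      match_scalars <;> (push_cast; ring)
  have hupper : ∀ n : ℤ, 2 ≤ n → VirRel c M n := by
    intro n hn
    exact Int.le_induction base2 (fun k hk ih => step k hk ih) n hn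
  -- downward via hermiticity
  have hneg : ∀ n : ℤ, VirRel c M n → VirRel c M (-n) := by
    intro n hPn m
    set z : ℂ := (c : ℂ) / 12 * (((-n) ^ 3 - -n : ℤ) : ℂ) * (if -n + m = 0 then 1 else 0) with hz
    set B : Module.End ℂ V := ((-n - m : ℤ) : ℂ) • M (-n + m) + z • (1 : Module.End ℂ V) with hB
    have key : ∀ u v : V, (inner ℂ u ((⁅M (-n), M m⁆ : Module.End ℂ V) v) : ℂ) = inner ℂ u (B v) := by
      intro u v
      have l1 : (inner ℂ u ((M (-n)) ((M m) v)) : ℂ) = inner ℂ ((M (-m)) ((M n) u)) v := by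
        have a1 := herm n u ((M m) v)
        have a2 := herm (-m) ((M n) u) v
        rw [neg_neg] at a2
        rw [← a1, ← a2]
      have l2 : (inner ℂ u ((M m) ((M (-n)) v)) : ℂ) = inner ℂ ((M n) ((M (-m)) u)) v := by
        have a1 := herm (-m) u ((M (-n)) v)
        rw [neg_neg] at a1
        have a2 := herm n ((M (-m)) u) v
        rw [← a1, ← a2]
      have lhs_eq : (⁅M (-n), M m⁆ : Module.End ℂ V) v
          = (M (-n)) ((M m) v) - (M m) ((M (-n)) v) := by
        simp [Ring.lie_def, LinearMap.sub_apply, Module.End.mul_apply]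
      have c_eq : M (-m) * M n - M n * M (-m) = -⁅M n, M (-m)⁆ := by
        rw [Ring.lie_def, neg_sub]
      have a3 := herm (n - m) u v
      rw [show -(n - m) = -n + m from by ring] at a3
      calc (inner ℂ u ((⁅M (-n), M m⁆ : Module.End ℂ V) v) : ℂ)
          = inner ℂ u ((M (-n)) ((M m) v)) - inner ℂ u ((M m) ((M (-n)) v)) := by
            rw [lhs_eq, inner_sub_right]
        _ = inner ℂ ((M (-m)) ((M n) u)) v - inner ℂ ((M n) ((M (-m)) u)) v := by rw [l1, l2]
        _ = inner ℂ (((M (-m)) * (M n) - (M n) * (M (-m))) u) v := by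
            simp [LinearMap.sub_apply, Module.End.mul_apply, inner_sub_left]
        _ = inner ℂ ((-⁅M n, M (-m)⁆ : Module.End ℂ V) u) v := by rw [c_eq]
        _ = inner ℂ u (B v) := by
            rw [hPn (-m), show n + -m = n - m from by ring, hB, hz]
            by_cases hc : -n + m = 0
            · rw [if_pos hc, if_pos (show n - m = 0 by omega)]
              simp only [LinearMap.neg_apply, LinearMap.add_apply, LinearMap.smul_apply,
                Module.End.one_apply, inner_neg_left, inner_add_left, inner_smul_left,
                inner_add_right, inner_smul_right, ← a3]
              simp only [map_mul, map_div₀, Complex.conj_ofReal, map_intCast, map_one,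
                map_ofNat]
              push_cast
              ring
            · rw [if_neg hc, if_neg (show ¬ n - m = 0 by omega)]
              simp only [LinearMap.neg_apply, LinearMap.add_apply, LinearMap.smul_apply,
                Module.End.one_apply, inner_neg_left, inner_add_left, inner_smul_left,
                inner_add_right, inner_smul_right, ← a3]
              simp only [map_mul, map_div₀, Complex.conj_ofReal, map_intCast, map_one,
                map_ofNat, map_zero]
              push_cast
              ring
    have hvec : ∀ v : V, (⁅M (-n), M m⁆ : Module.End ℂ V) v = B v := by
      intro v
      have h0 : ∀ u : V, (inner ℂ u ((⁅M (-n), M m⁆ : Module.End ℂ V) v - B v) : ℂ) = 0 := by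
        intro u
        rw [inner_sub_right, key u v, sub_self]
      have h1 := h0 ((⁅M (-n), M m⁆ : Module.End ℂ V) v - B v)
      exact sub_eq_zero.mp (inner_self_eq_zero.mp h1)
    exact LinearMap.ext hvec
  intro n m
  by_cases hn1 : 2 ≤ n
  · exact hupper n hn1 m
  · by_cases hn2 : -1 ≤ n
    · have h : n = -1 ∨ n = 0 ∨ n = 1 := by omega
      rcases h with h | h | h <;> subst h <;> exact base _ (by norm_num) m
    · have h3 : 2 ≤ -n := by omega
      have h := hneg (-n) (hupper (-n) h3) m
      rwa [neg_neg] at h
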